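/- Let 2 < θ ≤ 3. Then ∫_ℝ 12π²·(θ−1)²·C(θ)·k² / (576π⁴·|k|^{7−θ} + (θ−1)²·C(θ)) dk = (24π³/(7−θ))·csc((4−θ)π/(7−θ))·((θ−1)/(24π²))^{6/(7−θ)}·C(θ)^{3/(7−θ)} (the integral converges absolutely since the integrand decays like |k|^{θ−5} at infinity). -/

import Mathlib

noncomputable section
open Real MeasureTheory Set

/-- `C(θ) = 4 π^{θ-1} ∫₀^∞ sin²(y)/y^θ dy` for `1 < θ < 3` and `C(3) = 4π²`. -/
def Cθ (θ : ℝ) : ℝ :=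
  if θ < 3 then 4 * π ^ (θ - 1) * ∫ y in Set.Ioi (0 : ℝ), sin y ^ 2 / y ^ θ
  else 4 * π ^ (2 : ℕ)

lemma betaReal {a : ℝ} (h0 : 0 < a) (h1 : a < 1) :
    ∫ t in Ioo (0:ℝ) 1, t ^ (a - 1) * (1 - t) ^ (-a) = π / Real.sin (π * a) := by
  have key : Complex.Gamma a * Complex.Gamma (1 - a) =
      Complex.betaIntegral a (1 - a) := by
    have := Complex.Gamma_mul_Gamma_eq_betaIntegral (s := (a:ℂ)) (t := 1 - (a:ℂ))
      (by simpa using h0) (by simp [Complex.sub_re]; linarith)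
    simpa using this
  have hL : Complex.Gamma a * Complex.Gamma (1 - a) = ((π / Real.sin (π * a) : ℝ) : ℂ) := by
    rw [show ((1 : ℂ) - a) = ((1 - a : ℝ) : ℂ) by push_cast; ring,
      Complex.Gamma_ofReal, Complex.Gamma_ofReal, ← Complex.ofReal_mul,
      Real.Gamma_mul_Gamma_one_sub]
  have hR : Complex.betaIntegral a (1 - a) =
      ((∫ t in Ioo (0:ℝ) 1, t ^ (a - 1) * (1 - t) ^ (-a) : ℝ) : ℂ) := by
    rw [Complex.betaIntegral, intervalIntegral.integral_of_le zero_le_one,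
      MeasureTheory.integral_Ioc_eq_integral_Ioo]
    rw [show ((∫ t in Ioo (0:ℝ) 1, t ^ (a - 1) * (1 - t) ^ (-a) : ℝ) : ℂ)
      = ∫ t in Ioo (0:ℝ) 1, ((t ^ (a - 1) * (1 - t) ^ (-a) : ℝ) : ℂ) from (integral_ofReal).symm]
    apply MeasureTheory.setIntegral_congr_fun measurableSet_Ioo
    intro x hx
    obtain ⟨hx0, hx1⟩ := hx
    have h1x : (0:ℝ) ≤ 1 - x := by linarith
    simp only [Complex.ofReal_mul]
    rw [show ((a:ℂ) - 1) = ((a - 1 : ℝ) : ℂ) by push_cast; ring,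
      show (1 - (a:ℂ) - 1) = ((-a : ℝ) : ℂ) by push_cast; ring,
      show ((1:ℂ) - (x:ℂ)) = ((1 - x : ℝ) : ℂ) by push_cast; ring,
      ← Complex.ofReal_cpow hx0.le, ← Complex.ofReal_cpow h1x]
  rw [key, hR] at hL
  exact_mod_cast hL

lemma substConv {p : ℝ} (hp : 3 < p) :
    ∫ t in Ioo (0:ℝ) 1, t ^ (3/p - 1) * (1 - t) ^ (-(3/p)) =
      ∫ x in Ioi (0:ℝ), p * (x ^ 2 / (1 + x ^ p)) := by
  have hp0 : (0:ℝ) < p := by linarith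
  set a : ℝ := 3 / p with ha
  set f : ℝ → ℝ := fun x => x ^ p / (1 + x ^ p) with hf
  set f' : ℝ → ℝ := fun x => p * x ^ (p - 1) / (1 + x ^ p) ^ 2 with hf'
  have hD : ∀ x : ℝ, 0 < x → 0 < 1 + x ^ p := fun x hx => by positivity
  have hderiv : ∀ x ∈ Ioi (0:ℝ), HasDerivWithinAt f (f' x) (Ioi 0) x := by
    intro x hx
    have hx0 : x ≠ 0 := ne_of_gt hx
    have h1 : HasDerivAt (fun y : ℝ => y ^ p) (p * x ^ (p - 1)) x :=
      Real.hasDerivAt_rpow_const (Or.inl hx0)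
    have h2 : HasDerivAt (fun y : ℝ => 1 + y ^ p) (p * x ^ (p - 1)) x := by
      exact h1.const_add 1
    have := h1.div h2 (ne_of_gt (hD x hx))
    apply HasDerivAt.hasDerivWithinAt
    convert this using 1
    · rfl
    · rfl
    field_simp [hf']
    ring
  have hinj : InjOn f (Ioi 0) := by
    have : StrictMonoOn f (Ioi 0) := by
      intro x hx y hy hxy
      have hxp : x ^ p < y ^ p := Real.rpow_lt_rpow (le_of_lt hx) hxy hp0
      simp only [hf]
      rw [div_lt_div_iff₀ (hD x hx) (hD y hy)]
      nlinarith
    exact this.injOn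
  have himg : f '' (Ioi 0) = Ioo 0 1 := by
    ext t
    constructor
    · rintro ⟨x, hx, rfl⟩
      have hxp : 0 < x ^ p := Real.rpow_pos_of_pos hx p
      exact ⟨div_pos hxp (hD x hx), (div_lt_one (hD x hx)).2 (by linarith)⟩
    · rintro ⟨ht0, ht1⟩
      have h1t : 0 < 1 - t := by linarith
      have hq : 0 < t / (1 - t) := div_pos ht0 h1t
      refine ⟨(t / (1 - t)) ^ p⁻¹, Real.rpow_pos_of_pos hq _, ?_⟩
      have : ((t / (1 - t)) ^ p⁻¹) ^ p = t / (1 - t) :=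
        Real.rpow_inv_rpow hq.le (ne_of_gt hp0)
      simp only [hf, this]
      field_simp
      ring
  calc ∫ t in Ioo (0:ℝ) 1, t ^ (a - 1) * (1 - t) ^ (-a)
      = ∫ t in f '' (Ioi 0), t ^ (a - 1) * (1 - t) ^ (-a) := by rw [himg]
    _ = ∫ x in Ioi (0:ℝ), |f' x| • ((f x) ^ (a - 1) * (1 - f x) ^ (-a)) :=
        integral_image_eq_integral_abs_deriv_smul measurableSet_Ioi hderiv hinj _
    _ = ∫ x in Ioi (0:ℝ), p * (x ^ 2 / (1 + x ^ p)) := by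
        apply setIntegral_congr_fun measurableSet_Ioi
        intro x hx
        have hx0 : (0:ℝ) < x := hx
        have hxp : 0 < x ^ p := Real.rpow_pos_of_pos hx0 p
        have hD' := hD x hx0
        have h1f : 1 - f x = 1 / (1 + x ^ p) := by
          simp only [hf]; field_simp; ring
        have hfx : f x ^ (a - 1) = x ^ (p * (a - 1)) / (1 + x ^ p) ^ (a - 1) := by
          simp only [hf]
          rw [Real.div_rpow hxp.le hD'.le, ← Real.rpow_mul hx0.le]
        have hpa : p * (a - 1) = 3 - p := by
          rw [ha]; field_simp
        have e1 : x ^ (p - 1) * x ^ (3 - p) = x ^ (2:ℕ) := by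
          rw [← Real.rpow_add hx0, ← Real.rpow_natCast x 2]
          norm_num
        have e2 : (1 + x ^ p) ^ a = (1 + x ^ p) ^ (a - 1) * (1 + x ^ p) := by
          rw [show a = (a - 1) + 1 by ring, Real.rpow_add hD', Real.rpow_one]
          ring_nf
        have h1fx : (1 - f x) ^ (-a) = (1 + x ^ p) ^ a := by
          rw [h1f, one_div, ← Real.rpow_neg_one, ← Real.rpow_mul hD'.le]
          norm_num
        have habs : |f' x| = p * x ^ (p - 1) / (1 + x ^ p) ^ 2 := by
          apply abs_of_pos
          have := Real.rpow_pos_of_pos hx0 (p - 1)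
          positivity
        simp only [smul_eq_mul]
        rw [habs, hfx, hpa, h1fx, e2]
        have hw : (0:ℝ) < (1 + x ^ p) ^ (a - 1) := Real.rpow_pos_of_pos hD' _
        have hcancel : x ^ (3 - p) / (1 + x ^ p) ^ (a - 1) *
            ((1 + x ^ p) ^ (a - 1) * (1 + x ^ p)) = x ^ (3 - p) * (1 + x ^ p) := by
          field_simp
        rw [hcancel]
        have hDD : (1 + x ^ p) / (1 + x ^ p) ^ 2 = 1 / (1 + x ^ p) := by
          rw [sq]
          field_simp
        calc p * x ^ (p - 1) / (1 + x ^ p) ^ 2 * (x ^ (3 - p) * (1 + x ^ p))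
            = p * (x ^ (p - 1) * x ^ (3 - p)) * ((1 + x ^ p) / (1 + x ^ p) ^ 2) := by ring
          _ = p * x ^ 2 * (1 / (1 + x ^ p)) := by rw [e1, hDD]
          _ = p * (x ^ 2 / (1 + x ^ p)) := by ring

lemma contOn_rpow {θ : ℝ} : ContinuousOn (fun y : ℝ => y ^ θ) (Ioi 0) := fun x hx =>
  (Real.continuousAt_rpow_const x θ (Or.inl (ne_of_gt hx))).continuousWithinAt

lemma sinIntegrand_contOn {θ : ℝ} :
    ContinuousOn (fun y : ℝ => sin y ^ 2 / y ^ θ) (Ioi 0) :=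
  ((Real.continuous_sin.pow 2).continuousOn).div contOn_rpow
    (fun x hx => ne_of_gt (Real.rpow_pos_of_pos hx θ))

lemma sinIntegrable {θ : ℝ} (h2 : 2 < θ) (h3 : θ < 3) :
    IntegrableOn (fun y : ℝ => sin y ^ 2 / y ^ θ) (Ioi 0) := by
  have hsplit : Ioc (0:ℝ) 1 ∪ Ioi 1 = Ioi 0 := Ioc_union_Ioi_eq_Ioi zero_le_one
  rw [← hsplit]
  apply IntegrableOn.union
  · have hint : IntegrableOn (fun y : ℝ => y ^ (2 - θ)) (Ioc (0:ℝ) 1) := by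
      have := intervalIntegral.intervalIntegrable_rpow' (a := 0) (b := 1) (r := 2 - θ)
        (by linarith)
      rwa [intervalIntegrable_iff_integrableOn_Ioc_of_le zero_le_one] at this
    apply hint.integrable.mono'
    · exact (sinIntegrand_contOn.mono Ioc_subset_Ioi_self).aestronglyMeasurable measurableSet_Ioc
    · filter_upwards [ae_restrict_mem measurableSet_Ioc] with y hy
      obtain ⟨hy0, hy1⟩ := hy
      have hyp : 0 < y ^ θ := Real.rpow_pos_of_pos hy0 θ
      rw [Real.norm_eq_abs, abs_div, abs_of_nonneg (sq_nonneg _), abs_of_pos hyp,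
        div_le_iff₀ hyp, ← Real.rpow_add hy0]
      have h1 : sin y ^ 2 ≤ y ^ (2:ℕ) := by
        have hs := Real.sin_le hy0.le
        have hs2 : -y ≤ sin y := by
          have : 0 ≤ sin y := Real.sin_nonneg_of_nonneg_of_le_pi hy0.le
            (by have := Real.pi_gt_three; linarith)
          linarith
        nlinarith
      calc sin y ^ 2 ≤ y ^ (2:ℕ) := h1
        _ = y ^ (2 - θ + θ) := by
            rw [← Real.rpow_natCast y 2]; norm_num
  · have hint : IntegrableOn (fun y : ℝ => y ^ (-θ)) (Ioi (1:ℝ)) :=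
      integrableOn_Ioi_rpow_of_lt (by linarith) zero_lt_one
    apply hint.integrable.mono'
    · exact (sinIntegrand_contOn.mono (t := Ioi 1) fun y hy => lt_trans zero_lt_one hy).aestronglyMeasurable
        measurableSet_Ioi
    · filter_upwards [ae_restrict_mem measurableSet_Ioi] with y hy
      have hy0 : (0:ℝ) < y := lt_trans zero_lt_one hy
      have hyp : 0 < y ^ θ := Real.rpow_pos_of_pos hy0 θ
      rw [Real.norm_eq_abs, abs_div, abs_of_nonneg (sq_nonneg _), abs_of_pos hyp,
        Real.rpow_neg hy0.le, ← one_div, div_le_div_iff₀ hyp hyp]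
      have : sin y ^ 2 ≤ 1 := by
        have := Real.neg_one_le_sin y
        have := Real.sin_le_one y
        nlinarith
      nlinarith

lemma Cθ_pos {θ : ℝ} (h2 : 2 < θ) (h3 : θ ≤ 3) : 0 < Cθ θ := by
  rcases lt_or_eq_of_le h3 with h | h
  · rw [Cθ, if_pos h]
    have hI : 0 < ∫ y in Ioi (0:ℝ), sin y ^ 2 / y ^ θ := by
      rw [setIntegral_pos_iff_support_of_nonneg_ae]
      · apply lt_of_lt_of_le _ (measure_mono (show Ioo (1:ℝ) 3 ⊆ _ from ?_))
        · rw [Real.volume_Ioo]; norm_num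
        · intro y hy
          obtain ⟨hy1, hy3⟩ := hy
          have hy0 : (0:ℝ) < y := lt_trans zero_lt_one hy1
          constructor
          · simp only [Function.mem_support]
            have hs : 0 < sin y := Real.sin_pos_of_pos_of_lt_pi hy0 (by
              have := Real.pi_gt_three; linarith)
            positivity
          · exact hy0
      · filter_upwards [ae_restrict_mem measurableSet_Ioi] with y hy
        have : 0 < y ^ θ := Real.rpow_pos_of_pos hy θ
        positivity
      · exact sinIntegrable h2 h
    have hπ : 0 < π ^ (θ - 1) := Real.rpow_pos_of_pos Real.pi_pos _
    positivity
  · rw [Cθ, if_neg (by rw [h]; exact lt_irrefl 3)]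
    have := Real.pi_pos
    positivity

theorem stmt15 (θ : ℝ) (hθ1 : 2 < θ) (hθ2 : θ ≤ 3) :
    Integrable (fun k : ℝ =>
      12 * π ^ 2 * (θ - 1) ^ 2 * Cθ θ * k ^ 2
        / (576 * π ^ 4 * |k| ^ (7 - θ) + (θ - 1) ^ 2 * Cθ θ)) ∧
    (∫ k : ℝ, 12 * π ^ 2 * (θ - 1) ^ 2 * Cθ θ * k ^ 2
        / (576 * π ^ 4 * |k| ^ (7 - θ) + (θ - 1) ^ 2 * Cθ θ)) =
      (24 * π ^ 3 / (7 - θ)) * (1 / Real.sin ((4 - θ) * π / (7 - θ)))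
        * ((θ - 1) / (24 * π ^ 2)) ^ (6 / (7 - θ)) * Cθ θ ^ (3 / (7 - θ)) := by
  have hπ := Real.pi_pos
  have hC : 0 < Cθ θ := Cθ_pos hθ1 hθ2
  set p : ℝ := 7 - θ with hp
  have hp3 : 3 < p := by rw [hp]; linarith
  have hp0 : (0:ℝ) < p := by linarith
  set A : ℝ := (θ - 1) ^ 2 * Cθ θ with hA
  have hApos : 0 < A := by
    have : (0:ℝ) < (θ - 1) ^ 2 := by nlinarith
    positivity
  set b : ℝ := 576 * π ^ 4 with hb
  have hbpos : 0 < b := by positivity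
  set G : ℝ → ℝ := fun y => 12 * π ^ 2 * A * y ^ 2 / (b * y ^ p + A) with hG
  have hfun : (fun k : ℝ =>
      12 * π ^ 2 * (θ - 1) ^ 2 * Cθ θ * k ^ 2
        / (576 * π ^ 4 * |k| ^ (7 - θ) + (θ - 1) ^ 2 * Cθ θ)) = fun k => G |k| := by
    funext k
    simp only [hG, hA, hb, hp, sq_abs]
    ring_nf
  -- continuity of G
  have hrpow_cont : Continuous (fun y : ℝ => y ^ p) := by
    rw [continuous_iff_continuousAt]
    exact fun x => Real.continuousAt_rpow_const x p (Or.inr hp0.le)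
  have hDpos : ∀ y : ℝ, 0 ≤ y → 0 < b * y ^ p + A := by
    intro y hy
    have : 0 ≤ y ^ p := Real.rpow_nonneg hy p
    nlinarith
  have hGcontOn : ContinuousOn G (Ici 0) := by
    apply ContinuousOn.div
    · fun_prop
    · exact (continuous_const.mul hrpow_cont).add continuous_const |>.continuousOn
    · exact fun y hy => ne_of_gt (hDpos y hy)
  have hGnonneg : ∀ y : ℝ, 0 ≤ y → 0 ≤ G y := by
    intro y hy
    have := hDpos y hy
    have : (0:ℝ) ≤ 12 * π ^ 2 * A * y ^ 2 := by positivity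
    exact div_nonneg this (le_of_lt (hDpos y hy))
  -- integrability on Ioi 0
  have hIoi : IntegrableOn G (Ioi 0) := by
    have hsplit : Ioc (0:ℝ) 1 ∪ Ioi 1 = Ioi 0 := Ioc_union_Ioi_eq_Ioi zero_le_one
    rw [← hsplit]
    apply IntegrableOn.union
    · exact (hGcontOn.mono (by intro y hy; exact hy.1)).integrableOn_compact
        isCompact_Icc |>.mono_set Ioc_subset_Icc_self
    · have hint : IntegrableOn (fun y : ℝ => 12 * π ^ 2 * A / b * y ^ (2 - p)) (Ioi (1:ℝ)) :=
        (integrableOn_Ioi_rpow_of_lt (by linarith) zero_lt_one).const_mul _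
      apply hint.mono'
      · exact (hGcontOn.mono (t := Ioi 1) fun y hy => le_of_lt (lt_trans zero_lt_one hy)).aestronglyMeasurable
          measurableSet_Ioi
      · filter_upwards [ae_restrict_mem measurableSet_Ioi] with y hy
        have hy0 : (0:ℝ) < y := lt_trans zero_lt_one hy
        have hyp : 0 < y ^ p := Real.rpow_pos_of_pos hy0 p
        rw [Real.norm_eq_abs, abs_of_nonneg (hGnonneg y hy0.le)]
        have step1 : G y ≤ 12 * π ^ 2 * A * y ^ 2 / (b * y ^ p) := by
          apply div_le_div_of_nonneg_left (by positivity) (by positivity)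
          nlinarith
        have e : y ^ ((2:ℝ) - p) * y ^ p = y ^ (2:ℕ) := by
          rw [← Real.rpow_add hy0, sub_add_cancel, ← Real.rpow_natCast y 2]
          norm_num
        have e2 : y ^ ((2:ℝ) - p) = y ^ (2:ℕ) / y ^ p := (eq_div_iff hyp.ne').mpr e
        have step2 : 12 * π ^ 2 * A * y ^ 2 / (b * y ^ p)
            = 12 * π ^ 2 * A / b * y ^ ((2:ℝ) - p) := by
          rw [e2]
          field_simp
        rw [← step2]
        exact step1
  have hIoiAbs : IntegrableOn (fun k : ℝ => G |k|) (Ioi 0) := by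
    apply hIoi.congr_fun _ measurableSet_Ioi
    intro y hy
    show G y = G |y|
    rw [abs_of_pos hy]
  have hIicAbs : IntegrableOn (fun k : ℝ => G |k|) (Iic 0) := by
    rw [← Measure.map_neg_eq_self (volume : Measure ℝ)]
    have m : MeasurableEmbedding fun x : ℝ => -x := (Homeomorph.neg ℝ).measurableEmbedding
    rw [m.integrableOn_map_iff]
    simp_rw [Function.comp_def, abs_neg, neg_preimage, neg_Iic, neg_zero]
    exact Iff.mpr integrableOn_Ici_iff_integrableOn_Ioi hIoiAbs
  have hInt : Integrable (fun k : ℝ => G |k|) := by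
    rw [← integrableOn_univ, ← Iic_union_Ioi (a := (0:ℝ))]
    exact hIicAbs.union hIoiAbs
  constructor
  · rw [hfun]; exact hInt
  -- compute the integral
  set lam : ℝ := (A / b) ^ p⁻¹ with hlam
  have hlampos : 0 < lam := Real.rpow_pos_of_pos (div_pos hApos hbpos) _
  have hlamp : lam ^ p = A / b := Real.rpow_inv_rpow (le_of_lt (div_pos hApos hbpos)) hp0.ne'
  have hsubst : ∫ x in Ioi (0:ℝ), G (lam * x) = ∫ x in Ioi (0:ℝ),
      12 * π ^ 2 * lam ^ (2:ℕ) * (x ^ 2 / (1 + x ^ p)) := by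
    apply setIntegral_congr_fun measurableSet_Ioi
    intro x hx
    have hx0 : (0:ℝ) < x := hx
    have hxp : 0 < x ^ p := Real.rpow_pos_of_pos hx0 p
    have hmul : (lam * x) ^ p = (A / b) * x ^ p := by
      rw [Real.mul_rpow hlampos.le hx0.le, hlamp]
    simp only [hG, hmul]
    have hden : b * (A / b * x ^ p) + A = A * (1 + x ^ p) := by
      field_simp
      ring
    rw [hden]
    rw [mul_pow]
    field_simp
  have hJ : ∫ x in Ioi (0:ℝ), x ^ 2 / (1 + x ^ p) = π / Real.sin (π * (3 / p)) / p := by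
    have ha0 : 0 < 3 / p := by positivity
    have ha1 : 3 / p < 1 := by rw [div_lt_one hp0]; linarith
    have h1 := betaReal ha0 ha1
    have h2 := substConv hp3
    rw [h2] at h1
    rw [MeasureTheory.integral_const_mul] at h1
    rw [eq_div_iff hp0.ne']
    linarith [h1]
  have hmain : ∫ x in Ioi (0:ℝ), G x = lam * (12 * π ^ 2 * lam ^ (2:ℕ) *
      (π / Real.sin (π * (3 / p)) / p)) := by
    have h0 := integral_comp_mul_left_Ioi G 0 hlampos
    rw [mul_zero] at h0
    have h1 : ∫ x in Ioi (0:ℝ), G x = lam * ∫ x in Ioi (0:ℝ), G (lam * x) := by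
      rw [h0, smul_eq_mul, ← mul_assoc, mul_inv_cancel₀ hlampos.ne', one_mul]
    rw [h1, hsubst, MeasureTheory.integral_const_mul, hJ]
  have hsin : Real.sin ((4 - θ) * π / p) = Real.sin (π * (3 / p)) := by
    rw [show (4 - θ) * π / p = π - π * (3 / p) by
        rw [hp]; field_simp [show (7 - θ) ≠ 0 by linarith]; ring,
      Real.sin_pi_sub]
  have hlam3 : lam ^ (3:ℕ) = ((θ - 1) / (24 * π ^ 2)) ^ (6 / p) * Cθ θ ^ (3 / p) := by
    have hu : (0:ℝ) ≤ (θ - 1) / (24 * π ^ 2) := by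
      apply div_nonneg (by linarith) (by positivity)
    have hAb : A / b = ((θ - 1) / (24 * π ^ 2)) ^ ((2:ℕ):ℝ) * Cθ θ := by
      rw [Real.rpow_natCast, hA, hb, div_pow,
        show (24 * π ^ 2) ^ (2:ℕ) = 576 * π ^ 4 by ring]
      field_simp
    rw [hlam, ← Real.rpow_natCast ((A / b) ^ p⁻¹) 3, ← Real.rpow_mul
      (le_of_lt (div_pos hApos hbpos)), hAb,
      Real.mul_rpow (Real.rpow_nonneg hu _) hC.le, ← Real.rpow_mul hu,
      show ((2:ℕ):ℝ) * (p⁻¹ * ((3:ℕ):ℝ)) = 6 / p by push_cast; field_simp; ring,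
      show (p⁻¹ * ((3:ℕ):ℝ)) = 3 / p by push_cast; field_simp]
  rw [hfun, integral_comp_abs, hmain, hsin]
  linear_combination (24 * π ^ 3 / p * (1 / Real.sin (π * (3 / p)))) * hlam3
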